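/- Let d ≥ 1, α, β > 0, x0 ∈ ℝ^d, λ1, λ2 ≥ 0, and assume: (i) f1, f2 : ℝ^d × ℝ^d → [0,∞) are C² with Hess f1(z,x) ⪰ λ1·I_{2d}, ∇²_x f2(z,x) ⪰ λ2·I_d, and x·∇_x f_i(z,x) ≥ −a_i for constants a_i > 0 (i = 1,2); (ii) ρ̃ is a probability measure on ℝ^d with an L¹ density such that log ρ̃ ∈ C²(ℝ^d) and ∇²_z log ρ̃(z) ⪯ −λ̃·I_d for some λ̃ > 0; (iii) W : ℝ^d → [0,∞) is C², convex, symmetric (W(−z) = W(z)), with z·∇W(z) ≥ −D and ‖∇W(z)‖ ≤ D(1+‖z‖) for some D > 0; (iv) ∇²_z f1(z,x) ⪯ Λ1·I_d for all (z,x) and sup_{‖x‖≤R} ∫ f2(z,x) dρ̄(z) < ∞ for every R > 0, where ρ̄ is a fixed probability measure on ℝ^d; and (v) αλ̃ > Λ1. Let A be the set of probability measures ρ on ℝ^d with finite second moment and KL(ρ|ρ̃) < ∞, and assume A is nonempty. Then G_d(x) := sup_{ρ ∈ A} G_c(ρ,x) is finite for every x ∈ ℝ^d and there exists a unique x_∞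 ∈ ℝ^d such that G_d(x_∞) ≤ G_d(x) for all x ∈ ℝ^d. -/

import Mathlib

open MeasureTheory
open scoped ENNReal RealInnerProductSpace

noncomputable section

section helpers
variable {E : Type*} [NormedAddCommGroup E] [NormedSpace ℝ E]

lemma line_d1 (f : E → ℝ) (hf : ContDiff ℝ 2 f) (x v : E) (t : ℝ) :
    HasDerivAt (fun s : ℝ => f (x + s • v)) (fderiv ℝ f (x + t • v) v) t := by
  have hline : HasDerivAt (fun s : ℝ => x + s • v) v t := by
    simpa using ((hasDerivAt_id t).smul_const v).const_add x
  exact ((hf.differentiable (by norm_num) _).hasFDerivAt).comp_hasDerivAt t hline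

lemma line_d2 (f : E → ℝ) (hf : ContDiff ℝ 2 f) (x v : E) (t : ℝ) :
    HasDerivAt (fun s : ℝ => fderiv ℝ f (x + s • v) v)
      (iteratedFDeriv ℝ 2 f (x + t • v) ![v, v]) t := by
  have hline : HasDerivAt (fun s : ℝ => x + s • v) v t := by
    simpa using ((hasDerivAt_id t).smul_const v).const_add x
  have hfd : ContDiff ℝ 1 (fderiv ℝ f) := hf.fderiv_right (by norm_num)
  have h1 : HasFDerivAt (fderiv ℝ f) (fderiv ℝ (fderiv ℝ f) (x + t • v)) (x + t • v) :=
    (hfd.differentiable one_ne_zero _).hasFDerivAt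
  have h2 := h1.clm_apply (hasFDerivAt_const v (x + t • v))
  have h3 := h2.comp_hasDerivAt t hline
  refine h3.congr_deriv ?_
  simp [iteratedFDeriv_two_apply]

lemma taylor_aux (f : E → ℝ) (hf : ContDiff ℝ 2 f) (x v : E) (c : ℝ)
    (hc : ∀ y : E, iteratedFDeriv ℝ 2 f y ![v, v] ≤ c) :
    f (x + v) ≤ f x + fderiv ℝ f x v + c / 2 := by
  set χ : ℝ → ℝ := fun t => f x + t * fderiv ℝ f x v + c * t ^ 2 / 2 - f (x + t • v) with hχdef
  set χ' : ℝ → ℝ := fun t => fderiv ℝ f x v + c * t - fderiv ℝ f (x + t • v) v with hχ'def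
  have hd1 : ∀ t, HasDerivAt χ (χ' t) t := by
    intro t
    have h1 : HasDerivAt (fun t : ℝ => f x + t * fderiv ℝ f x v + c * t ^ 2 / 2)
        (fderiv ℝ f x v + c * t) t := by
      have ha : HasDerivAt (fun t : ℝ => t * fderiv ℝ f x v) (fderiv ℝ f x v) t := by
        simpa using (hasDerivAt_id t).mul_const (fderiv ℝ f x v)
      have hb : HasDerivAt (fun t : ℝ => c * t ^ 2 / 2) (c * t) t := by
        have := ((hasDerivAt_pow 2 t).const_mul c).div_const 2
        simpa [mul_comm, mul_assoc, mul_div_assoc] using this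
      exact (ha.const_add (f x)).add hb
    exact h1.sub (line_d1 f hf x v t)
  have hd2 : ∀ t, HasDerivAt χ' (c - iteratedFDeriv ℝ 2 f (x + t • v) ![v, v]) t := by
    intro t
    have h1 : HasDerivAt (fun t : ℝ => fderiv ℝ f x v + c * t) c t := by
      simpa using ((hasDerivAt_id t).const_mul c).const_add (fderiv ℝ f x v)
    exact h1.sub (line_d2 f hf x v t)
  have hχ'0 : χ' 0 = 0 := by simp [hχ'def]
  have hmono : Monotone χ' := by
    apply monotone_of_deriv_nonneg (fun t => (hd2 t).differentiableAt)
    intro t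
    rw [(hd2 t).deriv]
    have := hc (x + t • v)
    linarith
  have hχ'nonneg : ∀ t ∈ Set.Ici (0:ℝ), 0 ≤ χ' t := fun t ht => hχ'0 ▸ hmono ht
  have hχmono : MonotoneOn χ (Set.Ici (0:ℝ)) := by
    apply monotoneOn_of_deriv_nonneg (convex_Ici 0)
      (fun t _ => (hd1 t).differentiableAt.continuousAt.continuousWithinAt)
      (fun t _ => (hd1 t).differentiableAt.differentiableWithinAt)
    intro t ht
    rw [(hd1 t).deriv]
    exact hχ'nonneg t (le_of_lt (by simpa using ht))
  have h01 := hχmono (Set.self_mem_Ici) (by norm_num : (1:ℝ) ∈ Set.Ici (0:ℝ)) zero_le_one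
  simp only [hχdef] at h01
  simp only [zero_smul, add_zero, one_smul, zero_mul, sub_self, one_mul, one_pow] at h01
  linarith

lemma subgrad_ineq (f : E → ℝ) (hf : ContDiff ℝ 2 f)
    (hc : ∀ y w, 0 ≤ iteratedFDeriv ℝ 2 f y ![w, w]) (x v : E) :
    f x + fderiv ℝ f x v ≤ f (x + v) := by
  have h := taylor_aux (fun y => -f y) hf.neg x v 0 (fun y => by
    have h2 := hc y v
    have : iteratedFDeriv ℝ 2 (fun y => -f y) y ![v, v]
        = -(iteratedFDeriv ℝ 2 f y ![v, v]) := by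
      show iteratedFDeriv ℝ 2 (-f) y ![v, v] = _
      rw [iteratedFDeriv_neg_apply, ContinuousMultilinearMap.neg_apply]
    rw [this]; linarith)
  have hdf : fderiv ℝ (fun y => -f y) x v = -(fderiv ℝ f x v) := by
    rw [fderiv_fun_neg]; rfl
  rw [hdf] at h
  linarith

lemma convexOn_of_subgrad (f : E → ℝ) (g : E → E →L[ℝ] ℝ)
    (h : ∀ u v : E, f u + g u v ≤ f (u + v)) : ConvexOn ℝ Set.univ f := by
  refine ⟨convex_univ, fun x _ y _ a b ha hb hab => ?_⟩
  set u := a • x + b • y with hu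
  have hx := h u (x - u)
  have hy := h u (y - u)
  have hxu : u + (x - u) = x := by abel
  have hyu : u + (y - u) = y := by abel
  rw [hxu] at hx; rw [hyu] at hy
  have hsum : a • (x - u) + b • (y - u) = 0 := by
    rw [hu]
    have hb' : b = 1 - a := by linarith
    rw [hb']
    module
  have hg : a * g u (x - u) + b * g u (y - u) = 0 := by
    have := congrArg (g u) hsum
    rwa [map_add, (g u).map_smul, (g u).map_smul, map_zero, smul_eq_mul, smul_eq_mul] at this
  have h1 : a * (f u + g u (x - u)) ≤ a * f x := mul_le_mul_of_nonneg_left hx ha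
  have h2 : b * (f u + g u (y - u)) ≤ b * f y := mul_le_mul_of_nonneg_left hy hb
  have : (a + b) * f u + (a * g u (x - u) + b * g u (y - u)) ≤ a * f x + b * f y := by
    ring_nf; ring_nf at h1 h2; linarith
  rw [hab, one_mul, hg, add_zero] at this
  simpa [u, smul_eq_mul] using this

end helpers

section measure_helpers
open Real

lemma my_integral_llr_nonneg {α : Type*} [MeasurableSpace α] {μ ν : Measure α}
    [IsProbabilityMeasure μ] [IsProbabilityMeasure ν] (hμν : μ ≪ ν)
    (h_int : Integrable (llr μ ν) μ) : 0 ≤ ∫ z, llr μ ν z ∂μ := by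
  set g := μ.rnDeriv ν with hg
  have hpos : ∀ᵐ z ∂μ, 0 < g z := Measure.rnDeriv_pos hμν
  have hlt : ∀ᵐ z ∂μ, g z < ⊤ := hμν.ae_le (Measure.rnDeriv_lt_top μ ν)
  set h : α → ℝ := fun z => ((g z).toReal)⁻¹ with hh
  have hptwise : ∀ᵐ z ∂μ, -llr μ ν z ≤ h z - 1 := by
    filter_upwards [hpos, hlt] with z h0 h1
    have ht : 0 < (g z).toReal := ENNReal.toReal_pos h0.ne' h1.ne
    have := Real.log_le_sub_one_of_pos (inv_pos.mpr ht)
    rw [Real.log_inv] at this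
    simpa [llr, hh] using this
  have hmuwd : ν.withDensity g = μ := Measure.withDensity_rnDeriv_eq μ ν hμν
  have hlin : ∫⁻ z, (g z)⁻¹ ∂μ ≤ 1 := by
    rw [← hmuwd, lintegral_withDensity_eq_lintegral_mul _ (Measure.measurable_rnDeriv μ ν)
      (show Measurable (fun z => (g z)⁻¹) from (Measure.measurable_rnDeriv μ ν).inv)]
    calc ∫⁻ z, (g z * (g z)⁻¹) ∂ν ≤ ∫⁻ _, 1 ∂ν := by
          apply lintegral_mono_ae
          filter_upwards with z
          exact ENNReal.mul_inv_le_one (g z)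
      _ = 1 := by simp
  have hofReal : ∀ᵐ z ∂μ, ENNReal.ofReal (h z) = (g z)⁻¹ := by
    filter_upwards [hpos, hlt] with z h0 h1
    show ENNReal.ofReal ((g z).toReal)⁻¹ = (g z)⁻¹
    rw [← ENNReal.toReal_inv]
    exact ENNReal.ofReal_toReal (by simp [h1.ne, h0.ne'])
  have hhnonneg : 0 ≤ h := fun z => by positivity
  have hhmeas : AEStronglyMeasurable h μ :=
    ((Measure.measurable_rnDeriv μ ν).ennreal_toReal.inv).aestronglyMeasurable
  have hhint : Integrable h μ := by
    refine ⟨hhmeas, ?_⟩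
    rw [hasFiniteIntegral_iff_norm]
    calc ∫⁻ z, ENNReal.ofReal ‖h z‖ ∂μ = ∫⁻ z, ENNReal.ofReal (h z) ∂μ := by
          apply lintegral_congr_ae
          filter_upwards with z
          rw [Real.norm_eq_abs, abs_of_nonneg (hhnonneg z)]
      _ = ∫⁻ z, (g z)⁻¹ ∂μ := lintegral_congr_ae hofReal
      _ ≤ 1 := hlin
      _ < ⊤ := ENNReal.one_lt_top
  have hinth : ∫ z, h z ∂μ ≤ 1 := by
    rw [integral_eq_lintegral_of_nonneg_ae (Filter.Eventually.of_forall hhnonneg) hhmeas]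
    calc (∫⁻ z, ENNReal.ofReal (h z) ∂μ).toReal ≤ ((1 : ℝ≥0∞)).toReal := by
          apply ENNReal.toReal_mono ENNReal.one_ne_top
          rw [lintegral_congr_ae hofReal]; exact hlin
      _ = 1 := by simp
  have hmono : ∫ z, -llr μ ν z ∂μ ≤ ∫ z, (h z - 1) ∂μ :=
    integral_mono_ae h_int.neg (hhint.sub (integrable_const 1)) hptwise
  rw [integral_neg] at hmono
  rw [integral_sub hhint (integrable_const 1)] at hmono
  simp only [integral_const, measure_univ, probReal_univ, ENNReal.toReal_one, smul_eq_mul, one_mul] at hmono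
  linarith

lemma integrable_exp_quad {F : Type*} [NormedAddCommGroup F] [InnerProductSpace ℝ F]
    [FiniteDimensional ℝ F] [MeasurableSpace F] [BorelSpace F] {k : ℝ} (hk : 0 < k) (C c2 : ℝ) :
    Integrable (fun z : F => Real.exp (C + c2 * ‖z‖ - k * ‖z‖ ^ 2)) (volume : Measure F) := by
  have base : Integrable (fun v : F => Real.exp (-(k/2) * ‖v‖^2)) (volume : Measure F) := by
    have h := (GaussianFourier.integrable_cexp_neg_mul_sq_norm_add (V := F) (b := ((k/2 : ℝ) : ℂ))
      (by simp [hk]) 0 0).norm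
    apply h.congr
    filter_upwards with v
    rw [Complex.norm_exp]
    simp [Complex.add_re, Complex.mul_re, Complex.ofReal_re, Complex.ofReal_im]
    left
    norm_cast
  have hbase2 := base.const_mul (Real.exp (C + c2^2/(2*k)))
  have hcont : Continuous (fun z : F => Real.exp (C + c2 * ‖z‖ - k * ‖z‖ ^ 2)) := by
    apply Real.continuous_exp.comp
    continuity
  apply hbase2.mono' hcont.aestronglyMeasurable
  filter_upwards with z
  rw [Real.norm_eq_abs, abs_of_nonneg (Real.exp_pos _).le, ← Real.exp_add]
  apply Real.exp_le_exp.mpr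
  have h2k : (0:ℝ) < 2 * k := by linarith
  have key : c2 * ‖z‖ ≤ (c2^2 + k^2*‖z‖^2) / (2*k) := by
    rw [le_div_iff₀ h2k]
    nlinarith [sq_nonneg (c2 - k * ‖z‖)]
  have heq : (c2^2 + k^2*‖z‖^2) / (2*k) = c2^2/(2*k) + (k/2)*‖z‖^2 := by
    field_simp
  rw [heq] at key
  linarith

lemma quad_identity {E : Type*} [NormedAddCommGroup E] [InnerProductSpace ℝ E]
    (x y c : E) (a b : ℝ) (ha : 0 ≤ a) (hb : 0 ≤ b) (hab : a + b = 1) :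
    ‖a • x + b • y - c‖ ^ 2 = a * ‖x - c‖ ^ 2 + b * ‖y - c‖ ^ 2 - a * b * ‖x - y‖ ^ 2 := by
  have hb' : b = 1 - a := by linarith
  subst hb'
  have h1 : a • x + (1 - a) • y - c = a • (x - c) + (1 - a) • (y - c) := by module
  have h2 : x - y = (x - c) - (y - c) := by abel
  rw [h1, h2]
  rw [norm_add_sq_real, norm_sub_sq_real (x - c) (y - c), norm_smul, norm_smul,
    real_inner_smul_left, real_inner_smul_right]
  rw [Real.norm_eq_abs, Real.norm_eq_abs, abs_of_nonneg ha, abs_of_nonneg (by linarith : (0:ℝ) ≤ 1 - a)]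
  ring

end measure_helpers

/-- The competitive-case energy functional `G_c(ρ, x)`; here the Kullback–Leibler term is
written with the Radon–Nikodym derivative of `ρ` with respect to the reference measure
`ρ̃`, and `(W∗ρ)(z) = ∫ W(z − z') dρ(z')`. -/
noncomputable def Gc {d : ℕ}
    (f1 f2 : EuclideanSpace ℝ (Fin d) → EuclideanSpace ℝ (Fin d) → ℝ) (W : EuclideanSpace ℝ (Fin d) → ℝ)
    (ρb ρt : Measure (EuclideanSpace ℝ (Fin d))) (α β : ℝ) (x0 : EuclideanSpace ℝ (Fin d))
    (ρ : Measure (EuclideanSpace ℝ (Fin d))) (x : EuclideanSpace ℝ (Fin d)) : ℝ :=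
  (∫ z, f1 z x ∂ρ) + (∫ z, f2 z x ∂ρb) + (β / 2) * ‖x - x0‖ ^ 2
    - α * (∫ z, Real.log ((ρ.rnDeriv ρt z).toReal) ∂ρ)
    - (1 / 2) * (∫ z, (∫ z', W (z - z') ∂ρ) ∂ρ)

/-- The admissible set `A`: probability measures with finite second moment and finite
Kullback–Leibler divergence with respect to `ρ̃` (i.e. `ρ ≪ ρ̃` and the log-likelihood
ratio is `ρ`-integrable). -/
def Aset {d : ℕ} (ρt : Measure (EuclideanSpace ℝ (Fin d))) : Set (Measure (EuclideanSpace ℝ (Fin d))) :=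
  {ρ | IsProbabilityMeasure ρ ∧ Integrable (fun z => ‖z‖ ^ 2) ρ ∧ ρ ≪ ρt ∧
    Integrable (fun z => Real.log ((ρ.rnDeriv ρt z).toReal)) ρ}

set_option maxHeartbeats 2000000 in
/-- Theorem 3(a): existence and uniqueness of the minimizer of
`G_d(x) = sup_{ρ ∈ A} G_c(ρ, x)`. Under Assumptions 1–4 and `αλ̃ > Λ1`, `G_d` is finite
everywhere (the supremum is over a set bounded above) and has a unique minimizer. -/
theorem stmt4 {d : ℕ} (hd : 1 ≤ d) (α β : ℝ) (hα : 0 < α) (hβ : 0 < β)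
    (x0 : EuclideanSpace ℝ (Fin d)) (lam1 lam2 : ℝ) (hlam1 : 0 ≤ lam1) (hlam2 : 0 ≤ lam2)
    -- Assumption (i): convexity and growth of `f1`, `f2`
    (f1 f2 : EuclideanSpace ℝ (Fin d) → EuclideanSpace ℝ (Fin d) → ℝ)
    (hf1nn : ∀ z x, 0 ≤ f1 z x) (hf2nn : ∀ z x, 0 ≤ f2 z x)
    (hf1C : ContDiff ℝ 2 (fun p : EuclideanSpace ℝ (Fin d) × EuclideanSpace ℝ (Fin d) => f1 p.1 p.2))
    (hf2C : ContDiff ℝ 2 (fun p : EuclideanSpace ℝ (Fin d) × EuclideanSpace ℝ (Fin d) => f2 p.1 p.2))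
    (hf1hess : ∀ (z x v w : EuclideanSpace ℝ (Fin d)),
      lam1 * (‖v‖ ^ 2 + ‖w‖ ^ 2) ≤
        iteratedFDeriv ℝ 2 (fun p : EuclideanSpace ℝ (Fin d) × EuclideanSpace ℝ (Fin d) => f1 p.1 p.2) (z, x) ![(v, w), (v, w)])
    (hf2hess : ∀ (z x v : EuclideanSpace ℝ (Fin d)),
      lam2 * ‖v‖ ^ 2 ≤ iteratedFDeriv ℝ 2 (fun x' => f2 z x') x ![v, v])
    (a1 a2 : ℝ) (ha1 : 0 < a1) (ha2 : 0 < a2)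
    (hf1a : ∀ z x, -a1 ≤ ⟪x, gradient (fun x' => f1 z x') x⟫)
    (hf2a : ∀ z x, -a2 ≤ ⟪x, gradient (fun x' => f2 z x') x⟫)
    -- Assumption (ii): shape of the reference distribution `ρ̃`
    (ρtd : EuclideanSpace ℝ (Fin d) → ℝ) (hρtd_pos : ∀ z, 0 < ρtd z)
    (hρtd_int : Integrable ρtd volume) (hρtd_one : ∫ z, ρtd z = 1)
    (hlog : ContDiff ℝ 2 (fun z : EuclideanSpace ℝ (Fin d) => Real.log (ρtd z)))
    (lamt : ℝ) (hlamt : 0 < lamt)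
    (hloghess : ∀ z v : EuclideanSpace ℝ (Fin d),
      iteratedFDeriv ℝ 2 (fun z' => Real.log (ρtd z')) z ![v, v] ≤ -lamt * ‖v‖ ^ 2)
    (ρt : Measure (EuclideanSpace ℝ (Fin d)))
    (hρt : ρt = volume.withDensity (fun z => ENNReal.ofReal (ρtd z)))
    -- Assumption (iii): the interaction kernel `W`
    (W : EuclideanSpace ℝ (Fin d) → ℝ) (hWnn : ∀ z, 0 ≤ W z)
    (hWC : ContDiff ℝ 2 W) (hWconv : ConvexOn ℝ Set.univ W)
    (hWsymm : ∀ z, W (-z) = W z)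
    (D : ℝ) (hD : 0 < D)
    (hWD1 : ∀ z, -D ≤ ⟪z, gradient W z⟫)
    (hWD2 : ∀ z, ‖gradient W z‖ ≤ D * (1 + ‖z‖))
    -- Assumption (iv): upper bounds for `f1` and `f2`
    (Lam1 : ℝ)
    (hf1hess_up : ∀ (z x v : EuclideanSpace ℝ (Fin d)),
      iteratedFDeriv ℝ 2 (fun z' => f1 z' x) z ![v, v] ≤ Lam1 * ‖v‖ ^ 2)
    (ρb : Measure (EuclideanSpace ℝ (Fin d))) [IsProbabilityMeasure ρb]
    (hf2sup : ∀ R : ℝ, 0 < R → ∃ C : ℝ, ∀ x : EuclideanSpace ℝ (Fin d), ‖x‖ ≤ R →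
      ∫⁻ z, ENNReal.ofReal (f2 z x) ∂ρb ≤ ENNReal.ofReal C)
    -- Assumption (v)
    (hcoerc : Lam1 < α * lamt)
    (hAne : (Aset ρt).Nonempty) :
    (∀ x : EuclideanSpace ℝ (Fin d), BddAbove ((fun ρ => Gc f1 f2 W ρb ρt α β x0 ρ x) '' Aset ρt)) ∧
    ∃! xinf : EuclideanSpace ℝ (Fin d), ∀ x : EuclideanSpace ℝ (Fin d),
      sSup ((fun ρ => Gc f1 f2 W ρb ρt α β x0 ρ xinf) '' Aset ρt) ≤ sSup ((fun ρ => Gc f1 f2 W ρb ρt α β x0 ρ x) '' Aset ρt) := by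

  classical
  -- derived facts about the reference density
  have hρtdcont : Continuous ρtd := by
    have h : (fun z => Real.exp (Real.log (ρtd z))) = ρtd :=
      funext fun z => Real.exp_log (hρtd_pos z)
    rw [← h]; exact Real.continuous_exp.comp hlog.continuous
  haveI hρtprob : IsProbabilityMeasure ρt := by
    constructor
    rw [hρt, withDensity_apply _ MeasurableSet.univ, Measure.restrict_univ,
      ← ofReal_integral_eq_lintegral_ofReal hρtd_int
        (Filter.Eventually.of_forall fun z => (hρtd_pos z).le), hρtd_one]
    simp
  -- constants
  set L : ℝ := max Lam1 0 with hLdef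
  have hαl : 0 < α * lamt := by positivity
  have hLlt : L < α * lamt := max_lt hcoerc hαl
  have hL0 : 0 ≤ L := le_max_right _ _
  set δ : ℝ := (α * lamt - L) / 4 with hδdef
  have hδpos : 0 < δ := by rw [hδdef]; linarith
  set s : ℝ := (L + α * lamt) / (2 * α) with hsdef
  have hspos : 0 < s := by rw [hsdef]; apply div_pos (by linarith) (by linarith)
  have hslt : s < lamt := by rw [hsdef, div_lt_iff₀ (by linarith)]; nlinarith
  have hsL : L / 2 - α * s / 2 = -δ := by
    rw [hsdef, hδdef]; field_simp; ring
  set ψ : EuclideanSpace ℝ (Fin d) → ℝ := fun z => (s / 2) * ‖z‖ ^ 2 with hψdef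
  -- Taylor upper bound for log ρtd
  set Clog : ℝ := Real.log (ρtd 0) with hClog
  set blog : ℝ := ‖fderiv ℝ (fun z => Real.log (ρtd z)) 0‖ with hblog
  have hlogTaylor : ∀ z, Real.log (ρtd z) ≤ Clog + blog * ‖z‖ - (lamt / 2) * ‖z‖ ^ 2 := by
    intro z
    have h := taylor_aux _ hlog 0 z (-lamt * ‖z‖ ^ 2) (fun y => hloghess y z)
    rw [zero_add] at h
    have hb1 : fderiv ℝ (fun z => Real.log (ρtd z)) 0 z ≤ blog * ‖z‖ := by
      refine le_trans (le_abs_self _) ?_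
      rw [← Real.norm_eq_abs]
      exact (fderiv ℝ (fun z => Real.log (ρtd z)) 0).le_opNorm z
    linarith
  -- the tilting function is exponentially integrable w.r.t. ρt
  have hψcont : Continuous ψ := by
    rw [hψdef]
    exact continuous_const.mul (continuous_norm.pow 2)
  have hexp : Integrable (fun z => Real.exp (ψ z)) ρt := by
    rw [hρt, integrable_withDensity_iff hρtdcont.measurable.ennreal_ofReal
      (Filter.Eventually.of_forall fun z => ENNReal.ofReal_lt_top)]
    have hk : 0 < (lamt - s) / 2 := by linarith
    apply (integrable_exp_quad hk Clog blog).mono'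
    · have heqf : (fun x => Real.exp (ψ x) * (ENNReal.ofReal (ρtd x)).toReal)
          = fun x => Real.exp (ψ x) * max (ρtd x) 0 := by
        funext x; rw [ENNReal.toReal_ofReal']
      rw [heqf]
      exact ((Real.continuous_exp.comp hψcont).mul
        (hρtdcont.max continuous_const)).aestronglyMeasurable
    · filter_upwards with z
      rw [ENNReal.toReal_ofReal (hρtd_pos z).le, Real.norm_eq_abs,
        abs_of_nonneg (mul_nonneg (Real.exp_pos _).le (hρtd_pos z).le)]
      have h1 : Real.exp (ψ z) * ρtd z = Real.exp (ψ z + Real.log (ρtd z)) := by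
        rw [Real.exp_add, Real.exp_log (hρtd_pos z)]
      rw [h1]
      apply Real.exp_le_exp.mpr
      have := hlogTaylor z
      rw [hψdef]
      simp only []
      nlinarith [sq_nonneg ‖z‖]
  set Z : ℝ := ∫ z, Real.exp (ψ z) ∂ρt with hZdef
  -- partial regularity of f1 in z
  have hf1Cz : ∀ x : EuclideanSpace ℝ (Fin d), ContDiff ℝ 2 (fun z' => f1 z' x) := fun x =>
    hf1C.comp (contDiff_id.prodMk contDiff_const)
  set b2 : EuclideanSpace ℝ (Fin d) → ℝ := fun x => ‖fderiv ℝ (fun z' => f1 z' x) 0‖ with hb2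
  have hf1Taylor : ∀ x z, f1 z x ≤ f1 0 x + b2 x * ‖z‖ + (L / 2) * ‖z‖ ^ 2 := by
    intro x z
    have h := taylor_aux _ (hf1Cz x) 0 z (L * ‖z‖ ^ 2) (fun y =>
      (hf1hess_up y x z).trans (mul_le_mul_of_nonneg_right (le_max_left _ _) (sq_nonneg _)))
    rw [zero_add] at h
    have hb1 : fderiv ℝ (fun z' => f1 z' x) 0 z ≤ b2 x * ‖z‖ := by
      refine le_trans (le_abs_self _) ?_
      rw [← Real.norm_eq_abs]
      exact (fderiv ℝ (fun z' => f1 z' x) 0).le_opNorm z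
    linarith
  -- integrability of f1(·,x) for admissible ρ
  have hf1int : ∀ ρ : Measure (EuclideanSpace ℝ (Fin d)), ρ ∈ Aset ρt →
      ∀ x, Integrable (fun z => f1 z x) ρ := by
    intro ρ hρ x
    obtain ⟨hP, h2, hac, hllri⟩ := hρ
    haveI := hP
    have hnorm : Integrable (fun z : EuclideanSpace ℝ (Fin d) => ‖z‖) ρ := by
      apply ((integrable_const (1:ℝ)).add h2).mono' continuous_norm.aestronglyMeasurable
      filter_upwards with z
      rw [norm_norm]
      simp only [Pi.add_apply]
      nlinarith [sq_nonneg (‖z‖ - 1)]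
    apply (((integrable_const (f1 0 x)).add (hnorm.const_mul (b2 x))).add
      (h2.const_mul (L / 2))).mono'
      ((hf1C.continuous.comp (continuous_id.prodMk continuous_const)).aestronglyMeasurable)
    filter_upwards with z
    simp only [Function.comp_apply, id_eq, Pi.add_apply, Real.norm_eq_abs]
    rw [abs_of_nonneg (hf1nn z x)]
    linarith [hf1Taylor x z]
  -- KL lower bound via tilting
  have hKL : ∀ ρ : Measure (EuclideanSpace ℝ (Fin d)), ρ ∈ Aset ρt →
      (∫ z, ψ z ∂ρ) - Real.log Z ≤ ∫ z, llr ρ ρt z ∂ρ := by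
    intro ρ hρ
    obtain ⟨hP, h2, hac, hllri⟩ := hρ
    haveI := hP
    have hllri' : Integrable (llr ρ ρt) ρ := hllri
    have hψint : Integrable ψ ρ := h2.const_mul _
    haveI htp : IsProbabilityMeasure (ρt.tilted ψ) := isProbabilityMeasure_tilted hexp
    have hti : Integrable (llr ρ (ρt.tilted ψ)) ρ :=
      integrable_llr_tilted_right hac hψint hllri' hexp
    have h0 : 0 ≤ ∫ z, llr ρ (ρt.tilted ψ) z ∂ρ :=
      my_integral_llr_nonneg (hac.trans (absolutelyContinuous_tilted hexp)) hti
    have heq := integral_llr_tilted_right hac hψint hexp hllri'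
    rw [heq] at h0
    rw [hZdef]
    linarith
  -- pointwise bound for f1 minus the tilting function
  have hM : ∀ x z, f1 z x - α * ψ z ≤ f1 0 x + (b2 x) ^ 2 / (4 * δ) := by
    intro x z
    have h := hf1Taylor x z
    have hαψ : α * ψ z = (α * s / 2) * ‖z‖ ^ 2 := by rw [hψdef]; ring
    have key : b2 x * ‖z‖ ≤ (b2 x) ^ 2 / (4 * δ) + δ * ‖z‖ ^ 2 := by
      have h4 : (0:ℝ) < 4 * δ := by linarith
      have h5 : b2 x * ‖z‖ ≤ ((b2 x) ^ 2 + 4 * δ ^ 2 * ‖z‖ ^ 2) / (4 * δ) := by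
        rw [le_div_iff₀ h4]
        nlinarith [sq_nonneg (b2 x - 2 * δ * ‖z‖)]
      have heq2 : ((b2 x) ^ 2 + 4 * δ ^ 2 * ‖z‖ ^ 2) / (4 * δ)
          = (b2 x) ^ 2 / (4 * δ) + δ * ‖z‖ ^ 2 := by
        field_simp
      linarith [heq2 ▸ h5]
    have hLs : (L / 2) * ‖z‖ ^ 2 - (α * s / 2) * ‖z‖ ^ 2 = -δ * ‖z‖ ^ 2 := by
      have : L / 2 - α * s / 2 = -δ := hsL
      nlinarith [this]
    linarith
  -- PART 1 : boundedness above
  have hbdd : ∀ x : EuclideanSpace ℝ (Fin d),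
      BddAbove ((fun ρ => Gc f1 f2 W ρb ρt α β x0 ρ x) '' Aset ρt) := by
    intro x
    refine ⟨f1 0 x + (b2 x) ^ 2 / (4 * δ) + α * Real.log Z
      + (∫ z, f2 z x ∂ρb) + (β / 2) * ‖x - x0‖ ^ 2, ?_⟩
    rintro r ⟨ρ, hρ, rfl⟩
    obtain ⟨hP, h2, hac, hllri⟩ := id hρ
    haveI := hP
    have hψint : Integrable ψ ρ := h2.const_mul _
    have hf1i := hf1int ρ hρ x
    have hsub : ∫ z, (f1 z x - α * ψ z) ∂ρ ≤ f1 0 x + (b2 x) ^ 2 / (4 * δ) := by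
      refine le_trans (integral_mono (hf1i.sub (hψint.const_mul α)) (integrable_const _)
        (fun z => hM x z)) ?_
      simp
    rw [integral_sub hf1i (hψint.const_mul α), integral_const_mul] at hsub
    have hkl := hKL ρ hρ
    have hkl2 : α * ((∫ z, ψ z ∂ρ) - Real.log Z) ≤ α * ∫ z, llr ρ ρt z ∂ρ :=
      mul_le_mul_of_nonneg_left hkl hα.le
    rw [mul_sub] at hkl2
    have hW5 : 0 ≤ ∫ z, (∫ z', W (z - z') ∂ρ) ∂ρ :=
      integral_nonneg fun z => integral_nonneg fun z' => hWnn _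
    have hllr_eq : (∫ z, Real.log ((ρ.rnDeriv ρt z).toReal) ∂ρ) = ∫ z, llr ρ ρt z ∂ρ := rfl
    simp only [Gc]
    rw [hllr_eq]
    linarith
  refine ⟨hbdd, ?_⟩
  -- notation
  set Gd : EuclideanSpace ℝ (Fin d) → ℝ :=
    fun x => sSup ((fun ρ => Gc f1 f2 W ρb ρt α β x0 ρ x) '' Aset ρt) with hGddef
  have hne : ∀ x, ((fun ρ => Gc f1 f2 W ρb ρt α β x0 ρ x) '' Aset ρt).Nonempty :=
    fun x => hAne.image _
  have hGcle : ∀ (x : EuclideanSpace ℝ (Fin d)) ρ, ρ ∈ Aset ρt →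
      Gc f1 f2 W ρb ρt α β x0 ρ x ≤ Gd x := fun x ρ hρ => le_csSup (hbdd x) ⟨ρ, hρ, rfl⟩
  -- convexity of f1, f2 in x
  have hf1hess' : ∀ p q : EuclideanSpace ℝ (Fin d) × EuclideanSpace ℝ (Fin d),
      0 ≤ iteratedFDeriv ℝ 2
        (fun p : EuclideanSpace ℝ (Fin d) × EuclideanSpace ℝ (Fin d) => f1 p.1 p.2) p ![q, q] := by
    intro p q
    have h := hf1hess p.1 p.2 q.1 q.2
    have h2 : (0:ℝ) ≤ lam1 * (‖q.1‖ ^ 2 + ‖q.2‖ ^ 2) := by positivity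
    refine le_trans h2 ?_
    simpa using h
  have hf1subgrad : ∀ (z u v : EuclideanSpace ℝ (Fin d)),
      f1 z u + (fderiv ℝ (fun p : EuclideanSpace ℝ (Fin d) × EuclideanSpace ℝ (Fin d) =>
        f1 p.1 p.2) (z, u)) (0, v) ≤ f1 z (u + v) := by
    intro z u v
    have h := subgrad_ineq _ hf1C hf1hess' (z, u) (0, v)
    have he : ((z, u) : EuclideanSpace ℝ (Fin d) × EuclideanSpace ℝ (Fin d)) + (0, v)
        = (z, u + v) := by
      simp [Prod.ext_iff]
    rw [he] at h
    exact h
  have hf1cvx : ∀ z, ConvexOn ℝ Set.univ (fun x' => f1 z x') := by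
    intro z
    apply convexOn_of_subgrad _ (fun u =>
      (fderiv ℝ (fun p : EuclideanSpace ℝ (Fin d) × EuclideanSpace ℝ (Fin d) =>
        f1 p.1 p.2) (z, u)).comp (ContinuousLinearMap.inr ℝ _ _))
    intro u v
    simpa using hf1subgrad z u v
  have hf2Cx : ∀ z, ContDiff ℝ 2 (fun x' => f2 z x') := fun z =>
    hf2C.comp (contDiff_const.prodMk contDiff_id)
  have hf2cvx : ∀ z, ConvexOn ℝ Set.univ (fun x' => f2 z x') := by
    intro z
    apply convexOn_of_subgrad _ (fun u => fderiv ℝ (fun x' => f2 z x') u)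
    intro u v
    exact subgrad_ineq _ (hf2Cx z)
      (fun y w => le_trans (by positivity) (hf2hess z y w)) u v
  -- integrability of f2
  have hf2i : ∀ x, Integrable (fun z => f2 z x) ρb := by
    intro x
    obtain ⟨C, hC⟩ := hf2sup (‖x‖ + 1) (by positivity)
    refine ⟨(hf2C.continuous.comp (continuous_id.prodMk continuous_const)).aestronglyMeasurable, ?_⟩
    rw [hasFiniteIntegral_iff_norm]
    have heqn : ∫⁻ z, ENNReal.ofReal ‖f2 z x‖ ∂ρb = ∫⁻ z, ENNReal.ofReal (f2 z x) ∂ρb := by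
      apply lintegral_congr_ae
      filter_upwards with z
      rw [Real.norm_eq_abs, abs_of_nonneg (hf2nn z x)]
    rw [heqn]
    exact lt_of_le_of_lt (hC x (by linarith [norm_nonneg x])) ENNReal.ofReal_lt_top
  -- strong convexity of Gd
  have hstrong : ∀ (x y : EuclideanSpace ℝ (Fin d)) (a b : ℝ), 0 ≤ a → 0 ≤ b → a + b = 1 →
      Gd (a • x + b • y) ≤ a * Gd x + b * Gd y - (β / 2) * (a * b * ‖x - y‖ ^ 2) := by
    intro x y a b ha hb hab
    apply csSup_le (hne _)
    rintro r ⟨ρ, hρ, rfl⟩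
    have hper : Gc f1 f2 W ρb ρt α β x0 ρ (a • x + b • y)
        ≤ a * Gc f1 f2 W ρb ρt α β x0 ρ x + b * Gc f1 f2 W ρb ρt α β x0 ρ y
          - (β / 2) * (a * b * ‖x - y‖ ^ 2) := by
      have hint := hf1int ρ hρ
      have hI1 : ∫ z, f1 z (a • x + b • y) ∂ρ
          ≤ a * ∫ z, f1 z x ∂ρ + b * ∫ z, f1 z y ∂ρ := by
        calc ∫ z, f1 z (a • x + b • y) ∂ρ ≤ ∫ z, (a * f1 z x + b * f1 z y) ∂ρ := by
              apply integral_mono (hint _) (((hint x).const_mul a).add ((hint y).const_mul b))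
              intro z
              have := (hf1cvx z).2 (Set.mem_univ x) (Set.mem_univ y) ha hb hab
              simpa [smul_eq_mul] using this
          _ = a * ∫ z, f1 z x ∂ρ + b * ∫ z, f1 z y ∂ρ := by
              rw [integral_add ((hint x).const_mul a) ((hint y).const_mul b),
                integral_const_mul, integral_const_mul]
      have hI2 : ∫ z, f2 z (a • x + b • y) ∂ρb
          ≤ a * ∫ z, f2 z x ∂ρb + b * ∫ z, f2 z y ∂ρb := by
        calc ∫ z, f2 z (a • x + b • y) ∂ρb ≤ ∫ z, (a * f2 z x + b * f2 z y) ∂ρb := by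
              apply integral_mono (hf2i _) (((hf2i x).const_mul a).add ((hf2i y).const_mul b))
              intro z
              have := (hf2cvx z).2 (Set.mem_univ x) (Set.mem_univ y) ha hb hab
              simpa [smul_eq_mul] using this
          _ = a * ∫ z, f2 z x ∂ρb + b * ∫ z, f2 z y ∂ρb := by
              rw [integral_add ((hf2i x).const_mul a) ((hf2i y).const_mul b),
                integral_const_mul, integral_const_mul]
      have hq : (β / 2) * ‖a • x + b • y - x0‖ ^ 2
          = a * ((β / 2) * ‖x - x0‖ ^ 2) + b * ((β / 2) * ‖y - x0‖ ^ 2)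
            - (β / 2) * (a * b * ‖x - y‖ ^ 2) := by
        rw [quad_identity x y x0 a b ha hb hab]; ring
      have hb' : b = 1 - a := by linarith
      subst hb'
      simp only [Gc]
      linarith [hI1, hI2, hq]
    have hax : a * Gc f1 f2 W ρb ρt α β x0 ρ x ≤ a * Gd x :=
      mul_le_mul_of_nonneg_left (hGcle x ρ hρ) ha
    have hay : b * Gc f1 f2 W ρb ρt α β x0 ρ y ≤ b * Gd y :=
      mul_le_mul_of_nonneg_left (hGcle y ρ hρ) hb
    linarith
  -- convexity and continuity of the shifted function
  have hgconv : ConvexOn ℝ Set.univ (fun x => Gd x - (β / 2) * ‖x - x0‖ ^ 2) := by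
    refine ⟨convex_univ, fun x _ y _ a b ha hb hab => ?_⟩
    have hs1 := hstrong x y a b ha hb hab
    have hq := quad_identity x y x0 a b ha hb hab
    have hq2 : (β / 2) * ‖a • x + b • y - x0‖ ^ 2
        = (β / 2) * (a * ‖x - x0‖ ^ 2 + b * ‖y - x0‖ ^ 2 - a * b * ‖x - y‖ ^ 2) := by
      rw [hq]
    simp only [smul_eq_mul]
    have hb' : b = 1 - a := by linarith
    subst hb'
    linarith [hs1, hq2]
  have hgcont : Continuous (fun x => Gd x - (β / 2) * ‖x - x0‖ ^ 2) := by
    rw [← continuousOn_univ]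
    exact hgconv.continuousOn isOpen_univ
  have hqcont : Continuous (fun x : EuclideanSpace ℝ (Fin d) => (β / 2) * ‖x - x0‖ ^ 2) :=
    continuous_const.mul (((continuous_id.sub continuous_const).norm).pow 2)
  have hGdcont : Continuous Gd := by
    have h := hgcont.add hqcont
    exact h.congr (fun x => by simp)
  -- coercivity
  obtain ⟨w, hwmem, hwmin⟩ := (isCompact_closedBall x0 1).exists_isMinOn
    ⟨x0, Metric.mem_closedBall_self zero_le_one⟩ hgcont.continuousOn
  set g : EuclideanSpace ℝ (Fin d) → ℝ := fun x => Gd x - (β / 2) * ‖x - x0‖ ^ 2 with hgdef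
  set K : ℝ := g x0 - g w with hKdef
  have hK0 : 0 ≤ K := sub_nonneg.mpr (hwmin (Metric.mem_closedBall_self zero_le_one))
  have hgrow : ∀ x : EuclideanSpace ℝ (Fin d), 1 ≤ ‖x - x0‖ → g x0 - K * ‖x - x0‖ ≤ g x := by
    intro x hr
    set r : ℝ := ‖x - x0‖ with hrdef
    have hrpos : 0 < r := lt_of_lt_of_le one_pos hr
    have hinv1 : r⁻¹ ≤ 1 := by
      rw [inv_le_one_iff₀]; right; exact hr
    have hinvpos : 0 < r⁻¹ := inv_pos.mpr hrpos
    have hy : (1 - r⁻¹) • x0 + r⁻¹ • x ∈ Metric.closedBall x0 1 := by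
      rw [Metric.mem_closedBall, dist_eq_norm]
      have he : (1 - r⁻¹) • x0 + r⁻¹ • x - x0 = r⁻¹ • (x - x0) := by module
      rw [he, norm_smul, Real.norm_eq_abs, abs_of_nonneg hinvpos.le]
      exact le_of_eq (inv_mul_cancel₀ hrpos.ne')
    have hcvx := hgconv.2 (Set.mem_univ x0) (Set.mem_univ x)
      (by linarith : (0:ℝ) ≤ 1 - r⁻¹) hinvpos.le (by ring)
    simp only [smul_eq_mul] at hcvx
    have h5 : g w ≤ (1 - r⁻¹) * g x0 + r⁻¹ * g x := le_trans (hwmin hy) hcvx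
    have h6 := mul_le_mul_of_nonneg_left h5 hrpos.le
    have h7 : r * ((1 - r⁻¹) * g x0 + r⁻¹ * g x) = r * g x0 - g x0 + g x := by
      field_simp
    rw [h7] at h6
    have hKr : K * r = r * g x0 - r * g w := by rw [hKdef]; ring
    nlinarith [h6]
  set R : ℝ := max 1 (2 * (K + 1) / β) with hRdef
  have hR1 : 1 ≤ R := le_max_left _ _
  have hGdx0 : Gd x0 = g x0 := by
    rw [hgdef]; simp
  have hout : ∀ x : EuclideanSpace ℝ (Fin d), R < ‖x - x0‖ → Gd x0 < Gd x := by
    intro x hx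
    have hr1 : 1 ≤ ‖x - x0‖ := le_trans hR1 hx.le
    have hr0 : 0 < ‖x - x0‖ := lt_of_lt_of_le one_pos hr1
    have h8 := hgrow x hr1
    have hGdx : Gd x = g x + (β / 2) * ‖x - x0‖ ^ 2 := by
      rw [hgdef]; ring
    have hβr : K + 1 ≤ (β / 2) * ‖x - x0‖ := by
      have h9 : 2 * (K + 1) / β ≤ R := le_max_right _ _
      have h10 : 2 * (K + 1) / β < ‖x - x0‖ := lt_of_le_of_lt h9 hx
      rw [div_lt_iff₀ hβ] at h10
      linarith
    have h11 := mul_le_mul_of_nonneg_left hβr hr0.le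
    have h12 : ‖x - x0‖ * ((β / 2) * ‖x - x0‖) = (β / 2) * ‖x - x0‖ ^ 2 := by ring
    rw [h12] at h11
    rw [hGdx, hGdx0]
    have h13 : K * ‖x - x0‖ + ‖x - x0‖ ≤ β / 2 * ‖x - x0‖ ^ 2 := by nlinarith [h11]
    clear_value K g Gd R
    linarith [h8, h13, hr1]
  obtain ⟨xinf, hxinfmem, hxinfmin⟩ := (isCompact_closedBall x0 R).exists_isMinOn
    ⟨x0, Metric.mem_closedBall_self (by linarith)⟩ hGdcont.continuousOn
  have hglobal : ∀ x, Gd xinf ≤ Gd x := by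
    intro x
    by_cases hcase : ‖x - x0‖ ≤ R
    · exact hxinfmin (by rw [Metric.mem_closedBall, dist_eq_norm]; exact hcase)
    · have h13 := hout x (lt_of_not_ge hcase)
      have h14 : Gd xinf ≤ Gd x0 := hxinfmin (Metric.mem_closedBall_self (by linarith))
      linarith
  refine ⟨xinf, hglobal, ?_⟩
  intro y hy
  by_contra hne'
  have hmid := hstrong y xinf (1/2) (1/2) (by norm_num) (by norm_num) (by norm_num)
  have h15 : Gd xinf ≤ Gd ((1/2 : ℝ) • y + (1/2 : ℝ) • xinf) := hglobal _
  have h16 : Gd y ≤ Gd ((1/2 : ℝ) • y + (1/2 : ℝ) • xinf) := hy _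
  have h17 : Gd y ≤ Gd xinf := hy xinf
  have h18 : Gd xinf ≤ Gd y := hglobal y
  have h19 : ‖y - xinf‖ ^ 2 ≤ 0 := by nlinarith
  have h20 : ‖y - xinf‖ = 0 := by nlinarith [norm_nonneg (y - xinf), sq_nonneg ‖y - xinf‖]
  exact hne' (sub_eq_zero.mp (norm_eq_zero.mp h20))
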